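/- (Degree of the diagonal character computation.) Let B ∈ GL_N(C((t))) lie in the set B of cosets with representative lower-triangular-block form: diagonal entries t^{-η_1},...,t^{-η_{M+1}}, t^{-η'_1},...,t^{-η'_{N-M-1}} and arbitrary entries below the diagonal; and suppose B also lies in the set A of cosets through an upper-triangular-type element with unit diagonal in rows M+1,...,N. Fix M+1 ≤ i ≤ N-1 and suppose η'_{i-M} + η'_{i-M+1} + ... + η'_{N-M-1} = 0 together with the inequalities η'_{j} + ... + η'_{N-M-1} ≤ 0 for all j and η_{M+1} + η'_1 + ... + η'_{N-M-1} ≤ 0. Then for any representative A of this coset in the first form, the entry A_{i,i+1} lies in C[[t]]. -/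

import Mathlib

/- Common setup: `F = ℂ((t))` the field of formal Laurent series, `O = ℂ[[t]]` its ring of
integers (elements with no negative coefficients), `tpow k = t^k`.  `InGLO A` says that the
square matrix `A` lies in `GL(O)`, i.e. both `A` and an inverse of `A` have entries in `O`. -/

noncomputable section

abbrev F : Type := LaurentSeries ℂ

/-- `t^k` for `k : ℤ`, where `t` is the uniformizer of `ℂ((t))`. -/
noncomputable def tpow (k : ℤ) : F := (HahnSeries.single (1 : ℤ) (1 : ℂ) : F) ^ k

/-- The ring of integers `O = ℂ[[t]] ⊆ ℂ((t))`. -/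
def Oint : Set F := {f : F | ∀ m : ℤ, m < 0 → f.coeff m = 0}

/-- `A ∈ GL_n(O)`. -/
def InGLO {n : ℕ} (A : Matrix (Fin n) (Fin n) F) : Prop :=
  ∃ B : Matrix (Fin n) (Fin n) F,
    (∀ i j, A i j ∈ Oint) ∧ (∀ i j, B i j ∈ Oint) ∧ A * B = 1 ∧ B * A = 1

/-- Block-diagonal embedding of an `M×M` matrix into the top-left corner of an `n×n`
matrix, with `1`'s on the rest of the diagonal. -/
noncomputable def embTop (M n : ℕ) (g : Matrix (Fin M) (Fin M) F) :
    Matrix (Fin n) (Fin n) F := fun i j =>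
  if hi : (i : ℕ) < M then
    (if hj : (j : ℕ) < M then g ⟨i, hi⟩ ⟨j, hj⟩ else 0)
  else (if (i : ℕ) = (j : ℕ) then 1 else 0)

/-- Concatenation of `η : ℤ^{M+1}` and `η' : ℤ^{K}` into a sequence of length `N=M+1+K`. -/
def fullSeq (M K : ℕ) (eta : Fin (M + 1) → ℤ) (eta' : Fin K → ℤ) :
    Fin (M + 1 + K) → ℤ := fun i =>
  if h : (i : ℕ) < M + 1 then eta ⟨i, h⟩
  else eta' ⟨(i : ℕ) - (M + 1), by have := i.isLt; omega⟩

/-- Form `𝔄` of (9.13): upper triangular, diagonal `(t^{ξ_1},…,t^{ξ_M},1,…,1)`, and the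
entries of column `M+1` in the top `M` rows all equal to `1`. -/
def InFormA (M K : ℕ) (xi : Fin M → ℤ)
    (X : Matrix (Fin (M + 1 + K)) (Fin (M + 1 + K)) F) : Prop :=
  (∀ i j : Fin (M + 1 + K), (j : ℕ) < (i : ℕ) → X i j = 0) ∧
  (∀ i : Fin (M + 1 + K), ∀ h : (i : ℕ) < M, X i i = tpow (xi ⟨i, h⟩)) ∧
  (∀ i : Fin (M + 1 + K), M ≤ (i : ℕ) → X i i = 1) ∧
  (∀ i : Fin (M + 1 + K), (i : ℕ) < M → X i ⟨M, by omega⟩ = 1)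

/-- Form `𝔅` of (9.13): lower triangular with diagonal
`(t^{-η_1},…,t^{-η_{M+1}},t^{-η'_1},…,t^{-η'_K})`. -/
def InFormB (M K : ℕ) (eta : Fin (M + 1) → ℤ) (eta' : Fin K → ℤ)
    (Y : Matrix (Fin (M + 1 + K)) (Fin (M + 1 + K)) F) : Prop :=
  (∀ i j : Fin (M + 1 + K), (i : ℕ) < (j : ℕ) → Y i j = 0) ∧
  (∀ i, Y i i = tpow (-(fullSeq M K eta eta' i)))

lemma Oint_zero : (0 : F) ∈ Oint := fun m _ => HahnSeries.coeff_zero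
lemma Oint_one : (1 : F) ∈ Oint := by
  intro m hm
  rw [HahnSeries.coeff_one, if_neg (by omega)]
lemma Oint_add {f g : F} (hf : f ∈ Oint) (hg : g ∈ Oint) : f + g ∈ Oint := by
  intro m hm; rw [HahnSeries.coeff_add, hf m hm, hg m hm, add_zero]
lemma Oint_neg {f : F} (hf : f ∈ Oint) : -f ∈ Oint := by
  intro m hm; rw [HahnSeries.coeff_neg, hf m hm, neg_zero]
lemma Oint_mul {f g : F} (hf : f ∈ Oint) (hg : g ∈ Oint) : f * g ∈ Oint := by
  intro m hm
  rw [HahnSeries.coeff_mul]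
  refine Finset.sum_eq_zero fun ij hij => ?_
  rw [Finset.mem_addAntidiagonal] at hij
  by_cases h1 : ij.1 < 0
  · rw [hf _ h1, zero_mul]
  · have h2 : ij.2 < 0 := by have := hij.2.2; omega
    rw [hg _ h2, mul_zero]
lemma Oint_sum {ι : Type*} (s : Finset ι) (f : ι → F) (h : ∀ i ∈ s, f i ∈ Oint) :
    ∑ i ∈ s, f i ∈ Oint := by
  classical
  induction s using Finset.induction_on with
  | empty => simpa using Oint_zero
  | insert _ _ hx ih =>
    rw [Finset.sum_insert hx]
    exact Oint_add (h _ (Finset.mem_insert_self _ _))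
      (ih fun i hi => h i (Finset.mem_insert_of_mem hi))
lemma Oint_prod {ι : Type*} (s : Finset ι) (f : ι → F) (h : ∀ i ∈ s, f i ∈ Oint) :
    ∏ i ∈ s, f i ∈ Oint := by
  classical
  induction s using Finset.induction_on with
  | empty => simpa using Oint_one
  | insert _ _ hx ih =>
    rw [Finset.prod_insert hx]
    exact Oint_mul (h _ (Finset.mem_insert_self _ _))
      (ih fun i hi => h i (Finset.mem_insert_of_mem hi))

lemma det_mul_rows {n : ℕ} {ι : Type} [Fintype ι] [DecidableEq ι]
    (A B : Matrix (Fin n) (Fin n) F) (Rr T : ι → Fin n) :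
    Matrix.det (Matrix.of fun b a : ι => (A * B) (Rr a) (T b)) =
      ∑ r : ι → Fin n, (∏ b, B (r b) (T b)) *
        Matrix.det (Matrix.of fun b a : ι => A (Rr a) (r b)) := by
  have hdet : ∀ (M : Matrix ι ι F),
      M.det = (Matrix.detRowAlternating (R := F) (n := ι)).toMultilinearMap M := fun M => rfl
  have h1 : (Matrix.of fun b a : ι => (A * B) (Rr a) (T b)) =
      (fun b : ι => ∑ k : Fin n, B k (T b) • fun a : ι => A (Rr a) k) := by
    funext b a
    simp only [Matrix.of_apply, Matrix.mul_apply, Finset.sum_apply, Pi.smul_apply, smul_eq_mul]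
    exact Finset.sum_congr rfl fun k _ => mul_comm _ _
  rw [hdet, h1, MultilinearMap.map_sum]
  refine Finset.sum_congr rfl fun r _ => ?_
  rw [MultilinearMap.map_smul_univ, smul_eq_mul]
  rfl


lemma tpow_prod {ι : Type*} (s : Finset ι) (e : ι → ℤ) :
    ∏ i ∈ s, tpow (e i) = tpow (∑ i ∈ s, e i) := by
  classical
  have hne : (HahnSeries.single (1 : ℤ) (1 : ℂ) : F) ≠ 0 :=
    HahnSeries.single_ne_zero one_ne_zero
  induction s using Finset.induction_on with
  | empty => simp [tpow]
  | insert _ _ hx ih =>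
    rw [Finset.prod_insert hx, Finset.sum_insert hx, ih]
    simp only [tpow]
    rw [← zpow_add₀ hne]

lemma key {n i₀ m : ℕ} (hm : i₀ + m = n)
    (X Y c' : Matrix (Fin n) (Fin n) F)
    (hYX : Y = X * c')
    (hc' : ∀ i j, c' i j ∈ Oint)
    (hXut : ∀ i j : Fin n, (j : ℕ) < (i : ℕ) → X i j = 0)
    (hXd : ∀ i : Fin n, i₀ ≤ (i : ℕ) → X i i = 1)
    (Rr : Fin m → Fin n) (hR : ∀ a, (Rr a : ℕ) = i₀ + a)
    (T : Fin m → Fin n) :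
    Matrix.det (Matrix.of fun b a : Fin m => Y (Rr a) (T b)) ∈ Oint := by
  subst hYX
  rw [det_mul_rows]
  apply Oint_sum
  intro r _
  apply Oint_mul
  · exact Oint_prod _ _ fun b _ => hc' _ _
  · by_cases hinj : Function.Injective r
    · by_cases hlow : ∀ b, i₀ ≤ (r b : ℕ)
      · -- r is a bijection onto the bottom rows
        set σ : Fin m → Fin m := fun b =>
          ⟨(r b : ℕ) - i₀, by have := (r b).isLt; have := hlow b; omega⟩ with hσ
        have hσinj : Function.Injective σ := by
          intro b1 b2 h
          apply hinj
          have h1 := hlow b1; have h2 := hlow b2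
          have := congrArg Fin.val h
          simp only [hσ] at this
          exact Fin.ext (by omega)
        have hbij := Finite.injective_iff_bijective.mp hσinj
        set e : Equiv.Perm (Fin m) := Equiv.ofBijective σ hbij with he
        have hre : ∀ b, r b = Rr (e b) := by
          intro b
          have h1 := hlow b
          apply Fin.ext
          rw [hR]
          simp only [he, Equiv.ofBijective_apply, hσ]
          omega
        have hmat : (Matrix.of fun b a : Fin m => X (Rr a) (r b)) =
            (Matrix.of fun b a : Fin m => X (Rr a) (Rr b)).submatrix e id := by
          funext b a
          simp only [Matrix.of_apply, Matrix.submatrix_apply, id_eq]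
          rw [hre b]
        rw [hmat, Matrix.det_permute]
        have hlt : Matrix.det (Matrix.of fun b a : Fin m => X (Rr a) (Rr b)) = 1 := by
          rw [Matrix.det_of_lowerTriangular]
          · refine Finset.prod_eq_one fun b _ => ?_
            exact hXd _ (by rw [hR]; omega)
          · intro a b hab
            simp only [Matrix.of_apply]
            refine hXut _ _ ?_
            rw [hR, hR]
            simpa using hab
        rw [hlt, mul_one]
        rcases Int.units_eq_one_or (Equiv.Perm.sign e) with h | h <;> rw [h]
        · simpa using Oint_one
        · simpa using Oint_neg Oint_one
      · push_neg at hlow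
        obtain ⟨b, hb⟩ := hlow
        rw [Matrix.det_eq_zero_of_row_eq_zero b]
        · exact Oint_zero
        · intro a
          refine hXut _ _ ?_
          rw [hR]
          omega
    · rw [Function.not_injective_iff] at hinj
      obtain ⟨b1, b2, he, hne⟩ := hinj
      rw [Matrix.det_zero_of_row_eq hne (by funext a; simp only [Matrix.of_apply]; rw [he])]
      exact Oint_zero

/-THEOREM-/
/-- (Degree of the diagonal character computation.)  Suppose a coset of
`Gr_N` (`N = M+1+K`) has a representative `X` of form `𝔄` and a representative `Y` of
form `𝔅` (so `X = Y·c` for some `c ∈ GL_N(O)`), fix `M+1 ≤ i ≤ N-1` (1-based; 0-based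
`i₀` with `M ≤ i₀`, `i₀+1 < N`), and assume `η'_{i-M} + … + η'_{N-M-1} = 0` together with
`η'_j + … + η'_{N-M-1} ≤ 0` for all `j` and `η_{M+1} + η'_1 + … + η'_{N-M-1} ≤ 0`.  Then
the entry `X_{i,i+1}` lies in `ℂ[[t]]`. -/
theorem stmt17 (M K : ℕ) (xi : Fin M → ℤ) (eta : Fin (M + 1) → ℤ) (eta' : Fin K → ℤ)
    (i₀ : ℕ) (hi1 : M ≤ i₀) (hi2 : i₀ + 1 < M + 1 + K)
    (hzero : (∑ l : Fin K, if i₀ - M ≤ (l : ℕ) then eta' l else 0) = 0)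
    (hle : ∀ j : ℕ, (∑ l : Fin K, if j ≤ (l : ℕ) then eta' l else 0) ≤ 0)
    (hle2 : eta (Fin.last M) + (∑ l : Fin K, eta' l) ≤ 0)
    (X Y c : Matrix (Fin (M + 1 + K)) (Fin (M + 1 + K)) F)
    (hX : InFormA M K xi X) (hY : InFormB M K eta eta' Y) (hc : InGLO c)
    (hXY : X = Y * c) :
    X ⟨i₀, by omega⟩ ⟨i₀ + 1, hi2⟩ ∈ Oint := by
  obtain ⟨hXut, -, hXd, -⟩ := hX
  obtain ⟨hYlt, hYd⟩ := hY
  obtain ⟨c', hcO, hc'O, hcc', hc'c⟩ := hc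
  have hYX : Y = X * c' := by rw [hXY, Matrix.mul_assoc, hcc', Matrix.mul_one]
  set mm := M + 1 + K - i₀ with hmm
  have hm : i₀ + mm = M + 1 + K := by omega
  haveI : NeZero mm := ⟨by omega⟩
  set Rr : Fin mm → Fin (M + 1 + K) := fun a => ⟨i₀ + a, by have := a.isLt; omega⟩ with hRr
  have hR : ∀ a, (Rr a : ℕ) = i₀ + a := fun a => rfl
  have hR0 : (Rr 0 : ℕ) = i₀ := by rw [hR, Fin.val_zero mm, Nat.add_zero]
  have hYrow : ∀ j : Fin (M + 1 + K), Y (Rr 0) j ∈ Oint := by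
    intro j
    set T : Fin mm → Fin (M + 1 + K) := fun b => if (b : ℕ) = 0 then j else Rr b with hT
    have hk := key hm X Y c' hYX hc'O hXut (fun i hi => hXd i (by omega)) Rr hR T
    have hdet : Matrix.det (Matrix.of fun b a : Fin mm => Y (Rr a) (T b)) =
        Y (Rr 0) j *
          ∏ b ∈ Finset.univ.erase (0 : Fin mm), tpow (-(fullSeq M K eta eta' (Rr b))) := by
      rw [Matrix.det_of_upperTriangular]
      · rw [← Finset.mul_prod_erase Finset.univ _ (Finset.mem_univ (0 : Fin mm))]
        have h00 : (Matrix.of fun b a : Fin mm => Y (Rr a) (T b)) 0 0 = Y (Rr 0) j := by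
          simp only [Matrix.of_apply, hT]
          rw [if_pos (Fin.val_zero mm)]
        rw [h00]
        refine congrArg (fun z => Y (Rr 0) j * z) (Finset.prod_congr rfl fun b hb => ?_)
        ·
          have hb0 : (b : ℕ) ≠ 0 := by
            intro h
            exact (Finset.mem_erase.mp hb).1 (Fin.ext (by rw [h, Fin.val_zero mm]))
          simp only [Matrix.of_apply, hT, if_neg hb0]
          exact hYd (Rr b)
      · intro p q hqp
        have hqp' : (q : ℕ) < (p : ℕ) := hqp
        have hp0 : (p : ℕ) ≠ 0 := by omega
        simp only [Matrix.of_apply, hT, if_neg hp0]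
        refine hYlt _ _ ?_
        rw [hR, hR]
        omega
    have hsum : ∑ b ∈ Finset.univ.erase (0 : Fin mm), -(fullSeq M K eta eta' (Rr b)) = 0 := by
      rw [Finset.sum_neg_distrib, neg_eq_zero]
      have hre : ∑ b ∈ Finset.univ.erase (0 : Fin mm), fullSeq M K eta eta' (Rr b) =
          ∑ l ∈ Finset.univ.filter (fun l : Fin K => i₀ - M ≤ (l : ℕ)), eta' l := by
        refine Finset.sum_nbij'
          (fun b => (⟨i₀ + (b : ℕ) - (M + 1), by have := b.isLt; omega⟩ : Fin K))
          (fun l => (⟨(l : ℕ) + (M + 1) - i₀, by have := l.isLt; omega⟩ : Fin mm))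
          ?_ ?_ ?_ ?_ ?_
        · intro b hb
          have hb0 : (b : ℕ) ≠ 0 := by
            intro h
            exact (Finset.mem_erase.mp hb).1 (Fin.ext (by rw [h, Fin.val_zero mm]))
          refine Finset.mem_filter.mpr ⟨Finset.mem_univ _, ?_⟩
          simp only
          omega
        · intro l hl
          have hl' := (Finset.mem_filter.mp hl).2
          refine Finset.mem_erase.mpr ⟨?_, Finset.mem_univ _⟩
          intro h
          have := congrArg Fin.val h
          rw [Fin.val_zero mm] at this
          simp only at this
          omega
        · intro b hb
          have hb0 : (b : ℕ) ≠ 0 := by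
            intro h
            exact (Finset.mem_erase.mp hb).1 (Fin.ext (by rw [h, Fin.val_zero mm]))
          have := b.isLt
          exact Fin.ext (by simp only; omega)
        · intro l hl
          have hl' := (Finset.mem_filter.mp hl).2
          have := l.isLt
          exact Fin.ext (by simp only; omega)
        · intro b hb
          have hb0 : (b : ℕ) ≠ 0 := by
            intro h
            exact (Finset.mem_erase.mp hb).1 (Fin.ext (by rw [h, Fin.val_zero mm]))
          have hge : ¬ ((Rr b : ℕ) < M + 1) := by rw [hR]; omega
          simp only [fullSeq, dif_neg hge]
          rfl
      rw [hre, Finset.sum_filter]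
      exact hzero
    have hprod : ∏ b ∈ Finset.univ.erase (0 : Fin mm),
        tpow (-(fullSeq M K eta eta' (Rr b))) = 1 := by
      rw [tpow_prod, hsum]
      simp [tpow]
    rw [hdet, hprod, mul_one] at hk
    exact hk
  have heq : (⟨i₀, by omega⟩ : Fin (M + 1 + K)) = Rr 0 := Fin.ext (by rw [hR0])
  rw [hXY, heq, Matrix.mul_apply]
  exact Oint_sum _ _ fun k _ => Oint_mul (hYrow k) (hcO k _)
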